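/- Let J : M → ℝ^N be a closed embedding of a differentiable manifold M, and Q a probability measure on M whose Fréchet function with respect to the extrinsic distance ρ_J(p,q) = |J(p) − J(q)| is finite. Then the extrinsic Fréchet mean of Q exists (i.e., the Fréchet function has a unique minimizer) if and only if there is a unique point of J(M) closest in Euclidean distance to the mean m = ∫ J dQ, and in that case the extrinsic mean is J^{-1} of that closest point. -/

import Mathlib

open MeasureTheory Manifold

/-- Extrinsic Fréchet mean via a closed embedding: the extrinsic Fréchet mean of `Q`
exists (unique minimizer of the Fréchet function for the extrinsic distance) iff there
is a unique point of `J(M)` closest to the Euclidean mean `m` of `Q ∘ J⁻¹`; moreover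
any minimizer `p` maps under `J` to a closest point to `m` in `J(M)`. -/
theorem extrinsic_frechet_mean_iff_unique_projection
    {E H M : Type*} [NormedAddCommGroup E] [NormedSpace ℝ E]
    [TopologicalSpace H] (I : ModelWithCorners ℝ E H)
    [TopologicalSpace M] [ChartedSpace H M] [IsManifold I (⊤ : ℕ∞) M]
    [MeasurableSpace M] [BorelSpace M]
    {N : ℕ} (J : M → EuclideanSpace ℝ (Fin N))
    (hJsmooth : ContMDiff I 𝓘(ℝ, EuclideanSpace ℝ (Fin N)) (⊤ : ℕ∞) J)
    (hJclosed : Topology.IsClosedEmbedding J)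
    (hJimm : ∀ p : M, Function.Injective (mfderiv I 𝓘(ℝ, EuclideanSpace ℝ (Fin N)) J p))
    (Q : Measure M) [IsProbabilityMeasure Q]
    (hintJ : Integrable J Q)
    (hFfin : ∀ p : M, Integrable (fun q => ‖J p - J q‖ ^ 2) Q)
    (m : EuclideanSpace ℝ (Fin N)) (hm : m = ∫ q, J q ∂Q)
    (F : M → ℝ) (hF : ∀ p, F p = ∫ q, ‖J p - J q‖ ^ 2 ∂Q) :
    ((∃! p : M, ∀ p' : M, F p ≤ F p') ↔
      (∃! y : EuclideanSpace ℝ (Fin N), y ∈ Set.range J ∧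
        ∀ y' ∈ Set.range J, ‖y - m‖ ≤ ‖y' - m‖)) ∧
    (∀ p : M, (∀ p' : M, F p ≤ F p') →
      ∀ y' ∈ Set.range J, ‖J p - m‖ ≤ ‖y' - m‖) := by
  classical
  have hne : Nonempty M := by
    by_contra h
    have h0 : (Set.univ : Set M) = ∅ := Set.univ_eq_empty_iff.mpr (not_nonempty_iff.mp h)
    have h1 := measure_univ (μ := Q)
    rw [h0, measure_empty] at h1
    exact zero_ne_one h1
  obtain ⟨p₀⟩ := hne
  have hGint : Integrable (fun q => ‖m - J q‖ ^ 2) Q := by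
    have h1 : (fun q => ‖m - J q‖ ^ 2) = fun q =>
        ‖m - J p₀‖ ^ 2 + 2 * (inner ℝ (m - J p₀) (J p₀ - J q) : ℝ) + ‖J p₀ - J q‖ ^ 2 := by
      funext q
      have hq : m - J q = (m - J p₀) + (J p₀ - J q) := by abel
      rw [hq, norm_add_sq_real]
    rw [h1]
    exact ((integrable_const _).add
      ((((integrable_const _).sub hintJ).const_inner _).const_mul 2)).add (hFfin p₀)
  have hsub0 : ∫ q, (m - J q) ∂Q = 0 := by
    rw [integral_sub (integrable_const m) hintJ, integral_const, probReal_univ, ← hm]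
    simp
  have hid : ∀ p, F p = ‖J p - m‖ ^ 2 + ∫ q, ‖m - J q‖ ^ 2 ∂Q := by
    intro p
    rw [hF]
    have h1 : (fun q => ‖J p - J q‖ ^ 2) = fun q =>
        ‖J p - m‖ ^ 2 + 2 * (inner ℝ (J p - m) (m - J q) : ℝ) + ‖m - J q‖ ^ 2 := by
      funext q
      have hq : J p - J q = (J p - m) + (m - J q) := by abel
      rw [hq, norm_add_sq_real]
    have hi2 : Integrable (fun q => 2 * (inner ℝ (J p - m) (m - J q) : ℝ)) Q :=
      (((integrable_const m).sub hintJ).const_inner _).const_mul 2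
    have hi1 : Integrable (fun q => ‖J p - m‖ ^ 2 + 2 * (inner ℝ (J p - m) (m - J q) : ℝ)) Q :=
      (integrable_const _).add hi2
    have hsubint : Integrable (fun q => m - J q) Q := (integrable_const m).sub hintJ
    have hinner : ∫ q, (inner ℝ (J p - m) (m - J q) : ℝ) ∂Q = 0 := by
      rw [integral_inner hsubint]
      rw [show ∫ q, (m - J q) ∂Q = 0 from hsub0]
      simp
    rw [h1, integral_add hi1 hGint, integral_add (integrable_const _) hi2,
      integral_const, probReal_univ, integral_const_mul, hinner]
    simp
  have hkey : ∀ p p', F p ≤ F p' ↔ ‖J p - m‖ ≤ ‖J p' - m‖ := by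
    intro p p'
    rw [hid, hid, add_le_add_iff_right]
    constructor
    · intro h
      exact (pow_le_pow_iff_left₀ (norm_nonneg _) (norm_nonneg _) two_ne_zero).mp h
    · intro h
      exact pow_le_pow_left₀ (norm_nonneg _) h 2
  have hmin : ∀ p : M, (∀ p' : M, F p ≤ F p') ↔
      (∀ y' ∈ Set.range J, ‖J p - m‖ ≤ ‖y' - m‖) := by
    intro p
    constructor
    · rintro h y' ⟨p', rfl⟩
      exact (hkey p p').mp (h p')
    · intro h p'
      exact (hkey p p').mpr (h (J p') ⟨p', rfl⟩)
  constructor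
  · constructor
    · rintro ⟨p, hp, hpu⟩
      refine ⟨J p, ⟨⟨p, rfl⟩, (hmin p).mp hp⟩, ?_⟩
      rintro y ⟨⟨p', rfl⟩, hy⟩
      have : p' = p := hpu p' ((hmin p').mpr hy)
      rw [this]
    · rintro ⟨y, ⟨⟨p, rfl⟩, hy⟩, hyu⟩
      refine ⟨p, (hmin p).mpr hy, ?_⟩
      intro p' hp'
      have h1 : J p' = J p := hyu (J p') ⟨⟨p', rfl⟩, (hmin p').mp hp'⟩
      exact hJclosed.injective h1
  · intro p hp
    exact (hmin p).mp hp
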